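/- Let M be a 12-vertex 6-dimensional weak pseudomanifold with complementarity, and assume the link of every 4-element face of M is a combinatorial 2-sphere. Then the link of every 3-element face of M is a 9-vertex combinatorial 3-manifold, and it is connected. -/

import Mathlib

open Finset

/-- `K` is an (abstract) simplicial complex: faces are nonempty finite sets,
closed under passing to nonempty subsets. -/
def IsComplex {V : Type} [DecidableEq V] (K : Finset (Finset V)) : Prop :=
  (∀ σ ∈ K, σ.Nonempty) ∧ ∀ σ ∈ K, ∀ τ ⊆ σ, τ.Nonempty → τ ∈ K

/-- `K` is pure of dimension `d`: every face has at most `d+1` vertices and is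
contained in a face with exactly `d+1` vertices (a facet). -/
def IsPure {V : Type} [DecidableEq V] (d : ℕ) (K : Finset (Finset V)) : Prop :=
  (∀ σ ∈ K, σ.card ≤ d + 1) ∧ ∀ σ ∈ K, ∃ γ ∈ K, σ ⊆ γ ∧ γ.card = d + 1

/-- `K` is a `d`-dimensional weak pseudomanifold: a pure `d`-dimensional simplicial
complex (with at least one facet) in which every `(d-1)`-face (i.e. `d`-element face)
is contained in exactly two facets. -/
def IsWPM {V : Type} [DecidableEq V] (d : ℕ) (K : Finset (Finset V)) : Prop :=
  IsComplex K ∧ IsPure d K ∧ (∃ σ ∈ K, σ.card = d + 1) ∧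
    ∀ σ ∈ K, σ.card = d → (K.filter fun γ => γ.card = d + 1 ∧ σ ⊆ γ).card = 2

/-- Complementarity: exactly one of each complementary pair of nonempty subsets
of the vertex set is a face. -/
def Complementarity {V : Type} [DecidableEq V] [Fintype V] (K : Finset (Finset V)) : Prop :=
  ∀ A : Finset V, A.Nonempty → Aᶜ.Nonempty → (A ∈ K ↔ Aᶜ ∉ K)

/-- The link of `σ` in `K`: all faces `τ` disjoint from `σ` with `σ ∪ τ` a face. -/
def lk {V : Type} [DecidableEq V] (K : Finset (Finset V)) (σ : Finset V) :
    Finset (Finset V) :=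
  K.filter fun τ => σ ∩ τ = ∅ ∧ σ ∪ τ ∈ K

/-- The vertex set of a simplicial complex. -/
def vertSet {V : Type} [DecidableEq V] [Fintype V] (K : Finset (Finset V)) : Finset V :=
  Finset.univ.filter fun v => ({v} : Finset V) ∈ K

/-- Euler characteristic of a simplicial complex. -/
def eulerChar {V : Type} [DecidableEq V] (K : Finset (Finset V)) : ℤ :=
  ∑ σ ∈ K, (-1 : ℤ) ^ (σ.card - 1)

/-- A simplicial complex is connected if any two of its vertices are joined by a
path of edges. -/
def ComplexConnected {V : Type} [DecidableEq V] [Fintype V] (L : Finset (Finset V)) : Prop :=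
  ∀ u ∈ vertSet L, ∀ v ∈ vertSet L,
    Relation.ReflTransGen (fun a b : V => ({a, b} : Finset V) ∈ L) u v

/-- `L` is a circle (cycle complex): a connected 1-dimensional simplicial complex in
which every vertex lies in exactly two edges. -/
def IsCycle {V : Type} [DecidableEq V] [Fintype V] (L : Finset (Finset V)) : Prop :=
  IsComplex L ∧ (∀ σ ∈ L, σ.card ≤ 2) ∧ (∃ σ ∈ L, σ.card = 2) ∧
    (∀ v ∈ vertSet L, (L.filter fun e => e.card = 2 ∧ v ∈ e).card = 2) ∧
    ComplexConnected L

/-- `L` is a closed combinatorial 2-manifold: a 2-dimensional simplicial complex in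
which the link of every vertex is a circle. -/
def IsClosed2Mfd {V : Type} [DecidableEq V] [Fintype V] (L : Finset (Finset V)) : Prop :=
  IsComplex L ∧ (∀ σ ∈ L, σ.card ≤ 3) ∧ (∃ σ ∈ L, σ.card = 3) ∧
    ∀ v ∈ vertSet L, IsCycle (lk L {v})

/-- `L` is a combinatorial 2-sphere: a connected closed combinatorial 2-manifold of
Euler characteristic 2. -/
def Is2Sphere {V : Type} [DecidableEq V] [Fintype V] (L : Finset (Finset V)) : Prop :=
  IsClosed2Mfd L ∧ ComplexConnected L ∧ eulerChar L = 2

/-- The degree of a face: the number of vertices of its link. -/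
def degFace {V : Type} [DecidableEq V] [Fintype V] (K : Finset (Finset V))
    (σ : Finset V) : ℕ :=
  (vertSet (lk K σ)).card

lemma mem_vertSet {V : Type} [DecidableEq V] [Fintype V] {K : Finset (Finset V)} {v : V} :
    v ∈ vertSet K ↔ ({v} : Finset V) ∈ K := by
  simp [vertSet]

lemma lk_subset {V : Type} [DecidableEq V] {K : Finset (Finset V)} {σ : Finset V} :
    lk K σ ⊆ K := filter_subset _ _

lemma lk_complex {V : Type} [DecidableEq V] {K : Finset (Finset V)} (hK : IsComplex K)
    (σ : Finset V) : IsComplex (lk K σ) := by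
  constructor
  · exact fun τ hτ => hK.1 τ (lk_subset hτ)
  · intro τ hτ τ' hsub hne
    simp only [lk, mem_filter] at hτ ⊢
    refine ⟨hK.2 τ hτ.1 τ' hsub hne, ?_, ?_⟩
    · have h1 : σ ∩ τ' ⊆ σ ∩ τ := inter_subset_inter (Finset.Subset.refl σ) hsub
      rw [hτ.2.1] at h1
      exact subset_empty.mp h1
    · exact hK.2 (σ ∪ τ) hτ.2.2 (σ ∪ τ') (union_subset_union (Finset.Subset.refl σ) hsub)
        (hne.mono subset_union_right)

lemma lk_lk {V : Type} [DecidableEq V] {K : Finset (Finset V)} (hK : IsComplex K)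
    {σ : Finset V} {v : V} (hv : v ∉ σ) :
    lk (lk K σ) {v} = lk K (σ ∪ {v}) := by
  ext τ
  simp only [lk, mem_filter]
  constructor
  · rintro ⟨⟨hτK, hστ, hστK⟩, hvτ, _, _, hσvτK⟩
    refine ⟨hτK, ?_, ?_⟩
    · rw [union_inter_distrib_right, hστ, hvτ, union_empty]
    · rw [union_assoc]; exact hσvτK
  · rintro ⟨hτK, hint, hunK⟩
    rw [union_inter_distrib_right, union_eq_empty] at hint
    obtain ⟨hστ, hvτ⟩ := hint
    have hτne : τ.Nonempty := hK.1 τ hτK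
    rw [union_assoc] at hunK
    have hστK : σ ∪ τ ∈ K :=
      hK.2 _ hunK (σ ∪ τ) (union_subset_union (Finset.Subset.refl σ)
        subset_union_right) (hτne.mono subset_union_right)
    have hvτK : {v} ∪ τ ∈ K :=
      hK.2 _ hunK ({v} ∪ τ) subset_union_right (hτne.mono subset_union_right)
    refine ⟨⟨hτK, hστ, hστK⟩, hvτ, hvτK, ?_, hunK⟩
    rw [inter_union_distrib_left, hστ, union_empty]
    exact inter_singleton_of_notMem hv

lemma sphere_four {V : Type} [DecidableEq V] [Fintype V] {S : Finset (Finset V)}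
    (hS : Is2Sphere S) : 4 ≤ (vertSet S).card := by
  obtain ⟨⟨hC, _, ⟨σ, hσS, hσ3⟩, hlinks⟩, _, _⟩ := hS
  obtain ⟨a, b, c, hab, hac, hbc, rfl⟩ := card_eq_three.mp hσ3
  have hsub : ∀ x ∈ ({a, b, c} : Finset V), ({x} : Finset V) ∈ S := fun x hx =>
    hC.2 _ hσS {x} (singleton_subset_iff.mpr hx) (singleton_nonempty x)
  have haV : a ∈ vertSet S := mem_vertSet.mpr (hsub a (by simp))
  have hbV : b ∈ vertSet S := mem_vertSet.mpr (hsub b (by simp))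
  have hcV : c ∈ vertSet S := mem_vertSet.mpr (hsub c (by simp))
  obtain ⟨hCyC, hle2, _, hdeg, _⟩ := hlinks a haV
  have hbcS : ({b, c} : Finset V) ∈ S :=
    hC.2 _ hσS _ (by intro x hx; simp at hx ⊢; tauto) ⟨b, by simp⟩
  have habc : ({a} : Finset V) ∪ {b, c} = {a, b, c} := by ext z; simp; tauto
  have hbc_lk : ({b, c} : Finset V) ∈ lk S {a} := by
    simp only [lk, mem_filter]
    refine ⟨hbcS, ?_, ?_⟩
    · rw [singleton_inter_of_notMem (by simp [hab, hac])]
    · rw [habc]; exact hσS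
  have hb_lk : b ∈ vertSet (lk S {a}) := by
    rw [mem_vertSet]
    simp only [lk, mem_filter]
    refine ⟨hsub b (by simp), ?_, ?_⟩
    · rw [singleton_inter_of_notMem (by simp [hab])]
    · have : ({a} : Finset V) ∪ {b} = {a, b} := by ext x; simp
      rw [this]
      exact hC.2 _ hσS _ (by intro x hx; simp at hx ⊢; tauto) ⟨a, by simp⟩
  set F := (lk S {a}).filter (fun e => e.card = 2 ∧ b ∈ e) with hFdef
  have h2 : F.card = 2 := hdeg b hb_lk
  have hbcF : ({b, c} : Finset V) ∈ F := by
    rw [hFdef, mem_filter]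
    exact ⟨hbc_lk, card_pair hbc, by simp⟩
  obtain ⟨x, y, hxy, hF⟩ := card_eq_two.mp h2
  -- pick the edge e₂ ≠ {b,c}
  have hmem : ({b, c} : Finset V) ∈ ({x, y} : Finset (Finset V)) := hF ▸ hbcF
  obtain ⟨e₂, he₂F, he₂ne⟩ : ∃ e₂, e₂ ∈ F ∧ e₂ ≠ ({b, c} : Finset V) := by
    simp only [mem_insert, mem_singleton] at hmem
    rcases hmem with h | h
    · subst h
      exact ⟨y, by rw [hF]; simp, Ne.symm hxy⟩
    · subst h
      exact ⟨x, by rw [hF]; simp, hxy⟩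
  rw [hFdef, mem_filter] at he₂F
  obtain ⟨he₂lk, he₂2, hbe₂⟩ := he₂F
  obtain ⟨p, q, hpq, rfl⟩ := card_eq_two.mp he₂2
  -- e₂ = {b, d} with d the other endpoint
  obtain ⟨d, hdb, hed⟩ : ∃ d, d ≠ b ∧ ({p, q} : Finset V) = {b, d} := by
    simp only [mem_insert, mem_singleton] at hbe₂
    rcases hbe₂ with rfl | rfl
    · exact ⟨q, fun h => hpq h.symm, rfl⟩
    · exact ⟨p, fun h => hpq h, by rw [pair_comm]⟩
  rw [hed] at he₂lk he₂ne
  have hdc : d ≠ c := fun h => he₂ne (by rw [h])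
  simp only [lk, mem_filter] at he₂lk
  obtain ⟨hbdS, hint, _⟩ := he₂lk
  have hda : d ≠ a := by
    intro h
    have : a ∈ ({a} : Finset V) ∩ {b, d} := by simp [h]
    rw [hint] at this
    exact absurd this (notMem_empty a)
  have hdV : d ∈ vertSet S := by
    rw [mem_vertSet]
    exact hC.2 _ hbdS {d} (by intro x hx; simp at hx; simp [hx]) (singleton_nonempty d)
  have hsubV : ({a, b, c, d} : Finset V) ⊆ vertSet S := by
    intro x hx
    simp only [mem_insert, mem_singleton] at hx
    rcases hx with rfl | rfl | rfl | rfl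
    exacts [haV, hbV, hcV, hdV]
  have hcard : ({a, b, c, d} : Finset V).card = 4 := by
    rw [card_insert_of_notMem (by simp [hab, hac, hda.symm]),
      card_insert_of_notMem (by simp [hbc, hdb.symm]),
      card_insert_of_notMem (by simp [hdc.symm]), card_singleton]
  calc 4 = ({a, b, c, d} : Finset V).card := hcard.symm
    _ ≤ (vertSet S).card := card_le_card hsubV

/-- Lemma 4.6: in a 12-vertex 6-dimensional weak pseudomanifold with
complementarity in which the link of every 4-element face is a combinatorial
2-sphere, the link of every 3-element face is a connected 9-vertex combinatorial
3-manifold (all of its vertex links are combinatorial 2-spheres). -/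
theorem stmt_12 (M : Finset (Finset (Fin 12))) (hM : IsWPM 6 M)
    (hvert : ∀ v : Fin 12, ({v} : Finset (Fin 12)) ∈ M)
    (hcomp : Complementarity M)
    (hlink : ∀ γ ∈ M, γ.card = 4 → Is2Sphere (lk M γ)) :
    ∀ δ ∈ M, δ.card = 3 →
      (vertSet (lk M δ)).card = 9 ∧
      (∀ v ∈ vertSet (lk M δ), Is2Sphere (lk (lk M δ) {v})) ∧
      ComplexConnected (lk M δ) := by
  obtain ⟨hMc, hMp, _, _⟩ := hM
  -- 4-neighbourliness
  have h4 : ∀ A : Finset (Fin 12), A.Nonempty → A.card ≤ 4 → A ∈ M := by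
    intro A hne hle
    have hcc : Aᶜ.card = 12 - A.card := by
      rw [card_compl, Fintype.card_fin]
    have hccge : 8 ≤ Aᶜ.card := by omega
    have hcne : Aᶜ.Nonempty := card_pos.mp (by omega)
    rw [hcomp A hne hcne]
    intro hAc
    have := hMp.1 _ hAc
    omega
  intro δ hδ hδ3
  have hvs : vertSet (lk M δ) = δᶜ := by
    ext v
    simp only [mem_vertSet, lk, mem_filter, mem_compl]
    constructor
    · rintro ⟨_, hint, _⟩ hv
      have : v ∈ δ ∩ {v} := by simp [hv]
      rw [hint] at this
      exact absurd this (notMem_empty v)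
    · intro hv
      refine ⟨hvert v, inter_singleton_of_notMem hv, ?_⟩
      apply h4
      · exact ⟨v, by simp⟩
      · have : (δ ∪ {v}).card = 4 := by
          have he : δ ∪ {v} = insert v δ := by ext z; simp [or_comm]
          rw [he, card_insert_of_notMem hv, hδ3]
        omega
  have hcard9 : (vertSet (lk M δ)).card = 9 := by
    rw [hvs, card_compl, Fintype.card_fin, hδ3]
  -- each vertex link of the link is a 2-sphere
  have hvlink : ∀ v ∈ vertSet (lk M δ), Is2Sphere (lk (lk M δ) {v}) := by
    intro v hv
    rw [hvs, mem_compl] at hv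
    rw [lk_lk hMc hv]
    have hcard4 : (δ ∪ {v}).card = 4 := by
      have he : δ ∪ {v} = insert v δ := by ext z; simp [or_comm]
      rw [he, card_insert_of_notMem hv, hδ3]
    exact hlink _ (h4 _ ⟨v, by simp⟩ (le_of_eq hcard4)) hcard4
  refine ⟨hcard9, hvlink, ?_⟩
  -- connectivity
  set L := lk M δ with hL
  intro u hu v hv
  by_contra hcon
  -- neighbourhoods
  have hnbr : ∀ w ∈ vertSet L, 5 ≤ (insert w (vertSet (lk L {w}))).card ∧
      insert w (vertSet (lk L {w})) ⊆ vertSet L ∧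
      ∀ x ∈ insert w (vertSet (lk L {w})),
        Relation.ReflTransGen (fun a b : Fin 12 => ({a, b} : Finset (Fin 12)) ∈ L) w x := by
    intro w hw
    have hsphere : Is2Sphere (lk L {w}) := hvlink w hw
    have h4le := sphere_four hsphere
    have hwnot : w ∉ vertSet (lk L {w}) := by
      rw [mem_vertSet]
      simp only [lk, mem_filter]
      rintro ⟨_, hint, _⟩
      have : w ∈ ({w} : Finset (Fin 12)) ∩ {w} := by simp
      rw [hint] at this
      exact absurd this (notMem_empty w)
    have hedge : ∀ x ∈ vertSet (lk L {w}), ({w, x} : Finset (Fin 12)) ∈ L := by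
      intro x hx
      rw [mem_vertSet] at hx
      simp only [lk, mem_filter] at hx
      have : ({w} : Finset (Fin 12)) ∪ {x} = {w, x} := by ext y; simp
      rw [this] at hx
      exact hx.2.2
    refine ⟨?_, ?_, ?_⟩
    · rw [card_insert_of_notMem hwnot]; omega
    · intro x hx
      rcases mem_insert.mp hx with rfl | hx
      · exact hw
      · rw [mem_vertSet]
        have hLc : IsComplex L := lk_complex hMc δ
        exact hLc.2 _ (hedge x hx) {x} (by intro y hy; simp at hy; simp [hy])
          (singleton_nonempty x)
    · intro x hx
      rcases mem_insert.mp hx with rfl | hx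
      · exact Relation.ReflTransGen.refl
      · exact Relation.ReflTransGen.single (hedge x hx)
  obtain ⟨hcu, hsu, hpu⟩ := hnbr u hu
  obtain ⟨hcv, hsv, hpv⟩ := hnbr v hv
  have hdisj : Disjoint (insert u (vertSet (lk L {u}))) (insert v (vertSet (lk L {v}))) := by
    rw [disjoint_left]
    intro x hxu hxv
    apply hcon
    have h1 := hpu x hxu
    have h2 := hpv x hxv
    have h2' : Relation.ReflTransGen (fun a b : Fin 12 => ({a, b} : Finset (Fin 12)) ∈ L) x v := by
      apply (@Relation.ReflTransGen.symmetric _ _ ⟨?_⟩).symm _ _ h2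
      intro a b hab
      rwa [pair_comm]
    exact h1.trans h2'
  have hun : (insert u (vertSet (lk L {u})) ∪ insert v (vertSet (lk L {v}))).card ≤ 9 := by
    rw [← hcard9]
    exact card_le_card (union_subset hsu hsv)
  rw [card_union_of_disjoint hdisj] at hun
  omega
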